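/- Let n ≥ 2 and let Φ denote the cumulative distribution function of the standard Gaussian distribution N(0,1). Fix A* ∈ ℝ^{n×n}, c* ∈ ℝ^n, and define P_{A*,c*}(y,x) = ∏_{i=1}^n (1 − Φ(c*_i − (A*y)_i))^{x_i} · Φ(c*_i − (A*y)_i)^{1−x_i}. Let m be a probability mass function on {0,1}^n with m(y) > 0 for every y, and set μ(x,y) := m(y) · P_{A*,c*}(y,x). Then the function L(A,c) := Σ_{(x,y)} μ(x,y) · Σ_{i=1}^n [ x_i · log(1 − Φ(c_i − (Ay)_i)) + (1 − x_i) · log Φ(c_i − (Ay)_i) ] is strictly concave on ℝ^{n×n} × ℝ^n and attains its unique global maximum at (A,c) = (A*,c*). -/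

import Mathlib

open Matrix

/-- The real value of a binary observation coordinate. -/
def bval (b : Bool) : ℝ := if b then 1 else 0

/-- CDF of the standard Gaussian distribution `N(0,1)`. -/
noncomputable def gaussCDF (x : ℝ) : ℝ :=
  ((ProbabilityTheory.gaussianReal 0 1) (Set.Iic x)).toReal

/-- The expected log-likelihood objective. -/
noncomputable def Lobj (n : ℕ) (μ : (Fin n → Bool) × (Fin n → Bool) → ℝ)
    (θ : Matrix (Fin n) (Fin n) ℝ × (Fin n → ℝ)) : ℝ :=
  ∑ z : (Fin n → Bool) × (Fin n → Bool), μ z *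
    ∑ i, (bval (z.1 i) *
        Real.log (1 - gaussCDF (θ.2 i - (θ.1.mulVec (fun j => bval (z.2 j))) i))
      + (1 - bval (z.1 i)) *
        Real.log (gaussCDF (θ.2 i - (θ.1.mulVec (fun j => bval (z.2 j))) i)))

open MeasureTheory Real Filter

namespace Stmt11Aux

/-! ### The standard Gaussian density and basic properties of `gaussCDF` -/

noncomputable def phi (x : ℝ) : ℝ := (Real.sqrt (2 * Real.pi))⁻¹ * Real.exp (-x ^ 2 / 2)

lemma pdf_eq : ProbabilityTheory.gaussianPDFReal 0 1 = phi := by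
  funext x; simp [ProbabilityTheory.gaussianPDFReal, phi]

lemma phi_pos (x : ℝ) : 0 < phi x := by
  rw [← pdf_eq]; exact ProbabilityTheory.gaussianPDFReal_pos 0 1 x one_ne_zero

lemma continuous_phi : Continuous phi := by
  unfold phi; fun_prop

lemma integrable_phi : Integrable phi :=
  pdf_eq ▸ ProbabilityTheory.integrable_gaussianPDFReal 0 1

lemma phi_neg (x : ℝ) : phi (-x) = phi x := by simp [phi]

lemma hasDerivAt_phi (x : ℝ) : HasDerivAt phi (-x * phi x) x := by
  have h1 : HasDerivAt (fun x : ℝ => -x ^ 2 / 2) (-x) x := by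
    have := ((hasDerivAt_pow 2 x).neg).div_const 2
    refine this.congr_deriv ?_
    push_cast
    ring
  have h2 := (h1.exp).const_mul (Real.sqrt (2 * Real.pi))⁻¹
  refine (h2 : HasDerivAt phi _ x).congr_deriv ?_
  unfold phi
  ring

lemma gaussCDF_eq (x : ℝ) : gaussCDF x = ∫ t in Set.Iic x, phi t := by
  rw [gaussCDF, ProbabilityTheory.gaussianReal_apply_eq_integral 0 one_ne_zero,
    ENNReal.toReal_ofReal
      (integral_nonneg fun t => ProbabilityTheory.gaussianPDFReal_nonneg 0 1 t), pdf_eq]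

lemma gaussCDF_sub (a b : ℝ) : gaussCDF b - gaussCDF a = ∫ t in a..b, phi t := by
  rw [gaussCDF_eq, gaussCDF_eq]
  exact intervalIntegral.integral_Iic_sub_Iic integrable_phi.integrableOn
    integrable_phi.integrableOn

lemma hasDerivAt_gaussCDF (x : ℝ) : HasDerivAt gaussCDF (phi x) x := by
  have key : gaussCDF = fun y => gaussCDF 0 + ∫ t in (0:ℝ)..y, phi t := by
    funext y; rw [← gaussCDF_sub 0 y]; ring
  rw [key]
  exact (intervalIntegral.integral_hasDerivAt_right
    (integrable_phi.intervalIntegrable)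
    (continuous_phi.stronglyMeasurableAtFilter _ _)
    continuous_phi.continuousAt).const_add _

lemma strictMono_gaussCDF : StrictMono gaussCDF := by
  intro a b hab
  have h : 0 < ∫ t in a..b, phi t :=
    intervalIntegral.intervalIntegral_pos_of_pos
      integrable_phi.intervalIntegrable phi_pos hab
  rw [← gaussCDF_sub a b] at h
  linarith

lemma gaussCDF_pos (x : ℝ) : 0 < gaussCDF x := by
  rw [gaussCDF_eq]
  rw [setIntegral_pos_iff_support_of_nonneg_ae
    (ae_of_all _ fun t => (phi_pos t).le) integrable_phi.integrableOn]
  have hs : Function.support phi = Set.univ :=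
    Set.eq_univ_of_forall fun t => (phi_pos t).ne'
  simp [hs]

lemma integral_phi : ∫ t, phi t = 1 := by
  rw [← pdf_eq]
  exact ProbabilityTheory.integral_gaussianPDFReal_eq_one 0 one_ne_zero

lemma one_sub_gaussCDF (x : ℝ) : 1 - gaussCDF x = ∫ t in Set.Ioi x, phi t := by
  have h := intervalIntegral.integral_Iic_add_Ioi (b := x) (f := phi) (μ := volume)
    integrable_phi.integrableOn integrable_phi.integrableOn
  rw [gaussCDF_eq]
  rw [integral_phi] at h
  linarith

lemma gaussCDF_lt_one (x : ℝ) : gaussCDF x < 1 := by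
  have h : 0 < ∫ t in Set.Ioi x, phi t := by
    rw [setIntegral_pos_iff_support_of_nonneg_ae
      (ae_of_all _ fun t => (phi_pos t).le) integrable_phi.integrableOn]
    have hs : Function.support phi = Set.univ :=
      Set.eq_univ_of_forall fun t => (phi_pos t).ne'
    simp [hs]
  rw [← one_sub_gaussCDF] at h
  linarith

lemma gaussCDF_neg (x : ℝ) : gaussCDF (-x) = 1 - gaussCDF x := by
  rw [one_sub_gaussCDF, gaussCDF_eq]
  rw [← integral_comp_neg_Ioi]
  simp [phi_neg]

/-! ### The Mills-type inequality and strict concavity of `log ∘ gaussCDF` -/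

lemma integrable_mul_phi : Integrable (fun t => t * phi t) := by
  have h := (integrable_mul_exp_neg_mul_sq (b := 1/2) (by norm_num)).const_mul
    ((Real.sqrt (2 * Real.pi))⁻¹)
  refine h.congr (ae_of_all _ fun t => ?_)
  simp only
  rw [phi, show -t ^ 2 / 2 = -(1/2 : ℝ) * t ^ 2 by ring]
  ring

lemma tendsto_phi_atBot : Tendsto phi atBot (nhds 0) := by
  have h1 : Tendsto (fun t : ℝ => t ^ 2) atBot atTop := by
    have h0 : Tendsto (fun t : ℝ => (-t) ^ 2) atBot atTop :=
      (tendsto_pow_atTop (by norm_num : 2 ≠ 0)).comp tendsto_neg_atBot_atTop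
    simpa [neg_pow] using h0
  have h2 : Tendsto (fun t : ℝ => -t ^ 2 / 2) atBot atBot := by
    have h2' : Tendsto (fun t : ℝ => (-1/2 : ℝ) * t ^ 2) atBot atBot :=
      (tendsto_const_mul_atBot_of_neg (by norm_num)).2 h1
    refine h2'.congr fun t => by ring
  have h3 : Tendsto (fun t : ℝ => Real.exp (-t ^ 2 / 2)) atBot (nhds 0) :=
    Real.tendsto_exp_atBot.comp h2
  have h4 := h3.const_mul ((Real.sqrt (2 * Real.pi))⁻¹)
  rw [mul_zero] at h4
  exact h4

lemma integral_mul_phi_Iic (x : ℝ) :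
    ∫ t in Set.Iic x, t * phi t = -phi x := by
  have h := integral_Iic_of_hasDerivAt_of_tendsto' (a := x)
    (f := fun t => -phi t) (f' := fun t => t * phi t) (m := 0)
    (fun t _ => by exact (hasDerivAt_phi t).neg.congr_deriv (by ring))
    integrable_mul_phi.integrableOn
    (by simpa using tendsto_phi_atBot.neg)
  rw [h]; ring

lemma mills (x : ℝ) : 0 < x * gaussCDF x + phi x := by
  have h1 : ∫ t in Set.Iic x, (x - t) * phi t = x * gaussCDF x + phi x := by
    have hsub : ∀ t : ℝ, (x - t) * phi t = x * phi t - t * phi t := fun t => by ring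
    simp only [hsub]
    rw [integral_sub ((integrable_phi.const_mul x).integrableOn)
      integrable_mul_phi.integrableOn, integral_mul_phi_Iic,
      integral_const_mul, ← gaussCDF_eq]
    ring
  rw [← h1]
  rw [setIntegral_pos_iff_support_of_nonneg_ae]
  · have hsubset : Set.Iio x ⊆
        Function.support (fun t => (x - t) * phi t) ∩ Set.Iic x := by
      intro t ht
      simp only [Set.mem_Iio] at ht
      refine ⟨?_, le_of_lt ht⟩
      have : 0 < (x - t) * phi t := mul_pos (by linarith) (phi_pos t)
      exact this.ne'
    calc (0 : ENNReal) < volume (Set.Iio x) := by simp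
    _ ≤ _ := measure_mono hsubset
  · rw [EventuallyLE, ae_restrict_iff' measurableSet_Iic]
    exact ae_of_all _ fun t ht => mul_nonneg (by simp at ht ⊢; linarith) (phi_pos t).le
  · exact ((integrable_phi.const_mul x).sub integrable_mul_phi).integrableOn.congr_fun
      (fun t _ => by simp [Pi.sub_apply]; ring) measurableSet_Iic

noncomputable def ratio (x : ℝ) : ℝ := phi x / gaussCDF x

lemma hasDerivAt_ratio (x : ℝ) : HasDerivAt ratio
    ((-x * phi x * gaussCDF x - phi x * phi x) / (gaussCDF x) ^ 2) x :=
  (hasDerivAt_phi x).div (hasDerivAt_gaussCDF x) (gaussCDF_pos x).ne'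

lemma strictAnti_ratio : StrictAnti ratio := by
  apply strictAnti_of_deriv_neg
  intro x
  rw [(hasDerivAt_ratio x).deriv]
  apply div_neg_of_neg_of_pos
  · nlinarith [mills x, phi_pos x, gaussCDF_pos x]
  · exact pow_pos (gaussCDF_pos x) 2

lemma strictConcave_logCDF : StrictConcaveOn ℝ Set.univ (fun x => Real.log (gaussCDF x)) := by
  apply StrictAnti.strictConcaveOn_univ_of_deriv
  · rw [continuous_iff_continuousAt]
    exact fun x => ((hasDerivAt_gaussCDF x).log (gaussCDF_pos x).ne').continuousAt
  · have hd : deriv (fun x => Real.log (gaussCDF x)) = ratio := by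
      funext x
      exact ((hasDerivAt_gaussCDF x).log (gaussCDF_pos x).ne').deriv
    rw [hd]
    exact strictAnti_ratio

lemma comp_neg_strictConcave {g : ℝ → ℝ} (hg : StrictConcaveOn ℝ Set.univ g) :
    StrictConcaveOn ℝ Set.univ (fun x => g (-x)) := by
  refine ⟨convex_univ, fun x _ y _ hxy a b ha hb hab => ?_⟩
  have h := hg.2 (Set.mem_univ (-x)) (Set.mem_univ (-y))
    (fun hc => hxy (by linarith [neg_injective hc])) ha hb hab
  have harg : a • (-x) + b • (-y) = -(a • x + b • y) := by
    simp [smul_eq_mul]; ring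
  rw [harg] at h
  exact h

lemma strictConcave_logOneSub :
    StrictConcaveOn ℝ Set.univ (fun x => Real.log (1 - gaussCDF x)) := by
  have hfun : (fun x => Real.log (1 - gaussCDF x)) = fun x => Real.log (gaussCDF (-x)) := by
    funext x; rw [gaussCDF_neg]
  rw [hfun]
  exact comp_neg_strictConcave strictConcave_logCDF

/-! ### The scalar objective and Gibbs' inequality -/

noncomputable def fobj (p : ℝ) (t : ℝ) : ℝ :=
  p * Real.log (1 - gaussCDF t) + (1 - p) * Real.log (gaussCDF t)

lemma smul_strictConcave {c : ℝ} (hc : 0 < c) {g : ℝ → ℝ}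
    (hg : StrictConcaveOn ℝ Set.univ g) :
    StrictConcaveOn ℝ Set.univ (fun x => c * g x) := by
  refine ⟨convex_univ, fun x _ y _ hxy a b ha hb hab => ?_⟩
  have h := hg.2 (Set.mem_univ x) (Set.mem_univ y) hxy ha hb hab
  simp only [smul_eq_mul] at *
  nlinarith

lemma strictConcave_fobj {p : ℝ} (h0 : 0 < p) (h1 : p < 1) :
    StrictConcaveOn ℝ Set.univ (fobj p) := by
  have h := (smul_strictConcave h0 strictConcave_logOneSub).add
    (smul_strictConcave (by linarith : (0:ℝ) < 1 - p) strictConcave_logCDF)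
  exact h

lemma gibbs {q r : ℝ} (hq0 : 0 < q) (hq1 : q < 1) (hr0 : 0 < r) (hr1 : r < 1) (hne : r ≠ q) :
    (1 - q) * Real.log (1 - r) + q * Real.log r <
      (1 - q) * Real.log (1 - q) + q * Real.log q := by
  have hx : (1 - r) / (1 - q) ∈ Set.Ioi (0:ℝ) :=
    Set.mem_Ioi.2 (div_pos (by linarith) (by linarith))
  have hy : r / q ∈ Set.Ioi (0:ℝ) := Set.mem_Ioi.2 (div_pos hr0 hq0)
  have hxy : (1 - r) / (1 - q) ≠ r / q := by
    intro hEq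
    apply hne
    have h1q : (1:ℝ) - q ≠ 0 := by linarith
    field_simp at hEq
    nlinarith [hEq]
  have h := strictConcaveOn_log_Ioi.2 hx hy hxy (by linarith : (0:ℝ) < 1 - q) hq0 (by ring)
  simp only [smul_eq_mul] at h
  have harg : (1 - q) * ((1 - r) / (1 - q)) + q * (r / q) = 1 := by
    rw [mul_comm (1 - q) ((1 - r) / (1 - q)), div_mul_cancel₀ _ (by linarith : (1:ℝ) - q ≠ 0),
      mul_comm q (r / q), div_mul_cancel₀ _ hq0.ne']
    ring
  rw [harg, Real.log_one] at h
  rw [Real.log_div (by linarith) (by linarith), Real.log_div (by linarith) hq0.ne'] at h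
  nlinarith [h]

lemma fobj_lt {tstar t : ℝ} (hne : t ≠ tstar) :
    fobj (1 - gaussCDF tstar) t < fobj (1 - gaussCDF tstar) tstar := by
  have hq0 := gaussCDF_pos tstar
  have hq1 := gaussCDF_lt_one tstar
  have hr0 := gaussCDF_pos t
  have hr1 := gaussCDF_lt_one t
  have hrq : gaussCDF t ≠ gaussCDF tstar := fun h => hne (strictMono_gaussCDF.injective h)
  have h := gibbs hq0 hq1 hr0 hr1 hrq
  simp only [fobj]
  have e : (1 : ℝ) - (1 - gaussCDF tstar) = gaussCDF tstar := by ring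
  rw [e]
  linarith [h]

/-! ### The affine statistics and combinatorial identities -/

/-- The affine statistic `c_i - (A y)_i` as a function of the parameter `θ = (A, c)`. -/
noncomputable def tm {n : ℕ} (θ : Matrix (Fin n) (Fin n) ℝ × (Fin n → ℝ))
    (p : (Fin n → Bool) × Fin n) : ℝ :=
  θ.2 p.2 - θ.1.mulVec (fun j => bval (p.1 j)) p.2

lemma tm_affine {n : ℕ} (θ1 θ2 : Matrix (Fin n) (Fin n) ℝ × (Fin n → ℝ)) (a b : ℝ)
    (p : (Fin n → Bool) × Fin n) :
    tm (a • θ1 + b • θ2) p = a * tm θ1 p + b * tm θ2 p := by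
  simp only [tm, Prod.fst_add, Prod.snd_add, Prod.smul_fst, Prod.smul_snd,
    Matrix.add_mulVec, Matrix.smul_mulVec, Pi.add_apply, Pi.smul_apply, smul_eq_mul]
  ring

lemma tm_inj {n : ℕ} {θ1 θ2 : Matrix (Fin n) (Fin n) ℝ × (Fin n → ℝ)}
    (h : ∀ p, tm θ1 p = tm θ2 p) : θ1 = θ2 := by
  have hc : θ1.2 = θ2.2 := by
    funext i
    have := h (fun _ => false, i)
    simpa [tm, bval, Matrix.mulVec, dotProduct] using this
  have hA : θ1.1 = θ2.1 := by
    ext i j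
    have hij := h (fun k => decide (k = j), i)
    simp only [tm, bval, Matrix.mulVec, dotProduct, decide_eq_true_eq, mul_ite,
      mul_one, mul_zero] at hij
    rw [Finset.sum_ite_eq' Finset.univ j, Finset.sum_ite_eq' Finset.univ j] at hij
    simp only [Finset.mem_univ, if_true] at hij
    have := congrFun hc i
    linarith
  exact Prod.ext hA hc

lemma sum_prod_bool {n : ℕ} (G : Fin n → Bool → ℝ) :
    ∑ x : Fin n → Bool, ∏ j, G j (x j) = ∏ j, (G j true + G j false) := by
  rw [← Fintype.prod_sum]
  exact Finset.prod_congr rfl fun j _ => by simp [Fintype.sum_bool]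

lemma sum_prod_bool_pick {n : ℕ} (W : Fin n → Bool → ℝ) (i : Fin n) :
    ∑ x : Fin n → Bool, (∏ j, W j (x j)) * bval (x i)
      = W i true * ∏ j ∈ Finset.univ.erase i, (W j true + W j false) := by
  have h : ∀ x : Fin n → Bool, (∏ j, W j (x j)) * bval (x i)
      = ∏ j, (if j = i then W j (x j) * bval (x j) else W j (x j)) := by
    intro x
    have e1 : ∏ j, (if j = i then W j (x j) * bval (x j) else W j (x j))
        = (W i (x i) * bval (x i)) * ∏ j ∈ Finset.univ.erase i, W j (x j) := by
      rw [← Finset.mul_prod_erase Finset.univ _ (Finset.mem_univ i), if_pos rfl]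
      congr 1
      exact Finset.prod_congr rfl fun j hj => if_neg (Finset.mem_erase.1 hj).1
    have e2 : ∏ j, W j (x j) = W i (x i) * ∏ j ∈ Finset.univ.erase i, W j (x j) :=
      (Finset.mul_prod_erase Finset.univ _ (Finset.mem_univ i)).symm
    rw [e1, e2]; ring
  rw [Finset.sum_congr rfl fun x _ => h x]
  rw [sum_prod_bool (fun j b => if j = i then W j b * bval b else W j b)]
  rw [← Finset.mul_prod_erase Finset.univ _ (Finset.mem_univ i), if_pos rfl, if_pos rfl]
  have hb : W i true * bval true + W i false * bval false = W i true := by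
    simp [bval]
  rw [hb]
  congr 1
  exact Finset.prod_congr rfl fun j hj => by
    rw [if_neg (Finset.mem_erase.1 hj).1, if_neg (Finset.mem_erase.1 hj).1]

end Stmt11Aux

open Stmt11Aux

/-- **Theorem 4** (strict concavity and the true parameter as unique maximum).
If `μ(x,y) = m(y) P_{A*,c*}(y,x)` with `m` everywhere positive and `P_{A*,c*}` the Gaussian
transition matrix of the true system, then the expected log-likelihood `L` is strictly concave
on `ℝ^{n×n} × ℝ^n` and attains its unique global maximum at `(A*, c*)`. -/
theorem stmt11 (n : ℕ) (hn : 2 ≤ n)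
    (Astar : Matrix (Fin n) (Fin n) ℝ) (cstar : Fin n → ℝ)
    (m : (Fin n → Bool) → ℝ) (hm : ∀ y, 0 < m y) (hm1 : ∑ y, m y = 1)
    (μ : (Fin n → Bool) × (Fin n → Bool) → ℝ)
    (hμ : ∀ x y, μ (x, y) = m y *
      ∏ i, if x i
        then 1 - gaussCDF (cstar i - (Astar.mulVec (fun j => bval (y j))) i)
        else gaussCDF (cstar i - (Astar.mulVec (fun j => bval (y j))) i)) :
    StrictConcaveOn ℝ Set.univ (Lobj n μ) ∧
    (∀ θ : Matrix (Fin n) (Fin n) ℝ × (Fin n → ℝ),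
      θ ≠ (Astar, cstar) → Lobj n μ θ < Lobj n μ (Astar, cstar)) := by
  classical
  -- the Bernoulli weights of the true transition kernel
  set W : (Fin n → Bool) → Fin n → Bool → ℝ := fun y j b =>
    if b then 1 - gaussCDF (tm (Astar, cstar) (y, j))
    else gaussCDF (tm (Astar, cstar) (y, j)) with hW
  have hWsum : ∀ y j, W y j true + W y j false = 1 := by
    intro y j; simp [hW]
  have hμ' : ∀ x y, μ (x, y) = m y * ∏ j, W y j (x j) := by
    intro x y
    rw [hμ x y]
    rfl
  -- `Lobj` as a sum of strictly concave functions of the affine statistics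
  have key : ∀ θ : Matrix (Fin n) (Fin n) ℝ × (Fin n → ℝ),
      Lobj n μ θ = ∑ p : (Fin n → Bool) × Fin n,
        m p.1 * fobj (1 - gaussCDF (tm (Astar, cstar) p)) (tm θ p) := by
    intro θ
    rw [Lobj, Fintype.sum_prod_type, Finset.sum_comm, Fintype.sum_prod_type]
    refine Finset.sum_congr rfl fun y _ => ?_
    -- abbreviations for the two log terms
    set LA : Fin n → ℝ := fun i => Real.log (1 - gaussCDF (tm θ (y, i))) with hLA
    set LB : Fin n → ℝ := fun i => Real.log (gaussCDF (tm θ (y, i))) with hLB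
    have hS0 : ∑ x : Fin n → Bool, ∏ j, W y j (x j) = 1 := by
      rw [sum_prod_bool]
      rw [Finset.prod_congr rfl fun j _ => hWsum y j]
      exact Finset.prod_const_one
    have hS1 : ∀ i, ∑ x : Fin n → Bool, (∏ j, W y j (x j)) * bval (x i) = W y i true := by
      intro i
      rw [sum_prod_bool_pick]
      rw [Finset.prod_congr rfl fun j _ => hWsum y j, Finset.prod_const_one, mul_one]
    calc ∑ x : Fin n → Bool, μ (x, y) *
          ∑ i, (bval (x i) * LA i + (1 - bval (x i)) * LB i)
        = ∑ x : Fin n → Bool, ∑ i,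
            (((∏ j, W y j (x j)) * bval (x i)) * (m y * (LA i - LB i))
              + (∏ j, W y j (x j)) * (m y * LB i)) := by
          refine Finset.sum_congr rfl fun x _ => ?_
          rw [hμ' x y, Finset.mul_sum]
          refine Finset.sum_congr rfl fun i _ => ?_
          ring
      _ = ∑ i, ∑ x : Fin n → Bool,
            (((∏ j, W y j (x j)) * bval (x i)) * (m y * (LA i - LB i))
              + (∏ j, W y j (x j)) * (m y * LB i)) := Finset.sum_comm
      _ = ∑ i, (W y i true * (m y * (LA i - LB i)) + 1 * (m y * LB i)) := by
          refine Finset.sum_congr rfl fun i _ => ?_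
          rw [Finset.sum_add_distrib, ← Finset.sum_mul, ← Finset.sum_mul, hS0, hS1 i]
      _ = ∑ i, m y * fobj (1 - gaussCDF (tm (Astar, cstar) (y, i))) (tm θ (y, i)) := by
          refine Finset.sum_congr rfl fun i _ => ?_
          simp only [hW, if_pos, fobj, hLA, hLB]
          ring
  -- the per-index strict inequality for convex combinations
  constructor
  · refine ⟨convex_univ, fun θ1 _ θ2 _ hne a b ha hb hab => ?_⟩
    simp only [key, smul_eq_mul]
    rw [Finset.mul_sum, Finset.mul_sum, ← Finset.sum_add_distrib]
    apply Finset.sum_lt_sum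
    · intro p _
      rcases eq_or_ne (tm θ1 p) (tm θ2 p) with he | hne'
      · apply le_of_eq
        rw [tm_affine, he, show a * tm θ2 p + b * tm θ2 p = tm θ2 p by
          rw [← add_mul, hab, one_mul]]
        linear_combination
          (m p.1 * fobj (1 - gaussCDF (tm (Astar, cstar) p)) (tm θ2 p)) * hab
      · have hq1 := gaussCDF_pos (tm (Astar, cstar) p)
        have hq2 := gaussCDF_lt_one (tm (Astar, cstar) p)
        have hconc := (strictConcave_fobj (by linarith : (0:ℝ) <
            1 - gaussCDF (tm (Astar, cstar) p)) (by linarith)).2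
          (Set.mem_univ (tm θ1 p)) (Set.mem_univ (tm θ2 p)) hne' ha hb hab
        simp only [smul_eq_mul] at hconc
        have h2 := mul_lt_mul_of_pos_left hconc (hm p.1)
        rw [tm_affine]
        nlinarith [h2]
    · obtain ⟨p, hp⟩ : ∃ p, tm θ1 p ≠ tm θ2 p := by
        by_contra hall
        push_neg at hall
        exact hne (tm_inj hall)
      refine ⟨p, Finset.mem_univ p, ?_⟩
      have hq1 := gaussCDF_pos (tm (Astar, cstar) p)
      have hq2 := gaussCDF_lt_one (tm (Astar, cstar) p)
      have hconc := (strictConcave_fobj (by linarith : (0:ℝ) <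
          1 - gaussCDF (tm (Astar, cstar) p)) (by linarith)).2
        (Set.mem_univ (tm θ1 p)) (Set.mem_univ (tm θ2 p)) hp ha hb hab
      simp only [smul_eq_mul] at hconc
      have h2 := mul_lt_mul_of_pos_left hconc (hm p.1)
      rw [tm_affine]
      nlinarith [h2]
  · intro θ hθ
    simp only [key]
    apply Finset.sum_lt_sum
    · intro p _
      rcases eq_or_ne (tm θ p) (tm (Astar, cstar) p) with he | hne'
      · rw [he]
      · exact le_of_lt (mul_lt_mul_of_pos_left (fobj_lt hne') (hm p.1))
    · obtain ⟨p, hp⟩ : ∃ p, tm θ p ≠ tm (Astar, cstar) p := by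
        by_contra hall
        push_neg at hall
        exact hθ (tm_inj hall)
      exact ⟨p, Finset.mem_univ p, mul_lt_mul_of_pos_left (fobj_lt hp) (hm p.1)⟩
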